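/- Let f ∈ F[x_1,...,x_n] and let r be the unique polynomial with degree strictly less than d_i in each variable x_i such that f − r lies in the ideal generated by g_1(x_1), ..., g_n(x_n). Then r = 0 if and only if f ∈ I. -/

import Mathlib

open MvPolynomial

/-- The Taylor coefficient `f_u(s)`: the coefficient of `x^u` in `f(x + s)`. -/
noncomputable def taylorCoeff {F : Type*} [Field F] {n : ℕ}
    (f : MvPolynomial (Fin n) F) (s : Fin n → F) (u : Fin n →₀ ℕ) : F :=
  coeff u (aeval (fun i => X i + C (s i)) f)

/-- Membership in the ideal `I(s, w)`: all Taylor coefficients `f_u(s)` with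
`u < w` (componentwise) vanish. -/
def memPointIdeal {F : Type*} [Field F] {n : ℕ}
    (f : MvPolynomial (Fin n) F) (s : Fin n → F) (w : Fin n → ℕ) : Prop :=
  ∀ u : Fin n →₀ ℕ, (∀ i, u i < w i) → taylorCoeff f s u = 0

/-- The polynomial `g_i(x_i) = ∏_{s ∈ S_i} (x_i - s)^{m_i(s)}`. -/
noncomputable def gPoly {F : Type*} [Field F] {n : ℕ}
    (S : Fin n → Finset F) (m : Fin n → F → ℕ) (i : Fin n) : MvPolynomial (Fin n) F :=
  ∏ s ∈ S i, (X i - C s) ^ m i s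

/-- The size `d_i = Σ_{s ∈ S_i} m_i(s)` of the multiset `(S_i, m_i)`. -/
def dSize {F : Type*} {n : ℕ} (S : Fin n → Finset F) (m : Fin n → F → ℕ) (i : Fin n) : ℕ :=
  ∑ s ∈ S i, m i s

namespace AuxStmt3

variable {F : Type*} [Field F] {n : ℕ}

lemma taylorCoeff_sub (f g : MvPolynomial (Fin n) F) (s : Fin n → F) (u : Fin n →₀ ℕ) :
    taylorCoeff (f - g) s u = taylorCoeff f s u - taylorCoeff g s u := by
  simp [taylorCoeff, map_sub, coeff_sub]

lemma memPointIdeal_sub {f g : MvPolynomial (Fin n) F} {s : Fin n → F} {w : Fin n → ℕ}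
    (hf : memPointIdeal f s w) (hg : memPointIdeal g s w) : memPointIdeal (f - g) s w := by
  intro u hu
  rw [taylorCoeff_sub, hf u hu, hg u hu, sub_zero]

lemma memPointIdeal_mul (p : MvPolynomial (Fin n) F) {h : MvPolynomial (Fin n) F}
    {s : Fin n → F} {w : Fin n → ℕ} (hh : memPointIdeal h s w) :
    memPointIdeal (p * h) s w := by
  intro u hu
  show coeff u ((aeval fun i => X i + C (s i)) (p * h)) = 0
  rw [map_mul, coeff_mul]
  refine Finset.sum_eq_zero fun x hx => ?_
  rw [Finset.HasAntidiagonal.mem_antidiagonal] at hx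
  have h2 : ∀ i, x.2 i < w i := fun i => lt_of_le_of_lt
    (by rw [← hx]; exact le_add_self) (hu i)
  exact mul_eq_zero_of_right _ (hh x.2 h2)

lemma memPointIdeal_pow {s : Fin n → F} {w : Fin n → ℕ} {i : Fin n} {k : ℕ} (hk : w i ≤ k) :
    memPointIdeal ((X i - C (s i)) ^ k) s w := by
  intro u hu
  unfold taylorCoeff
  have : (aeval (fun i => X i + C (s i)) ((X i - C (s i)) ^ k) : MvPolynomial (Fin n) F)
      = X i ^ k := by
    rw [map_pow, map_sub, aeval_X, aeval_C, algebraMap_eq, add_sub_cancel_right]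
  rw [this, coeff_X_pow]
  have : Finsupp.single i k ≠ u := by
    intro h
    have := hu i
    rw [← h, Finsupp.single_eq_same] at this
    omega
  simp [this]

lemma memPointIdeal_gPoly (S : Fin n → Finset F) (m : Fin n → F → ℕ) (i : Fin n)
    (s : Fin n → F) (hs : ∀ j, s j ∈ S j) :
    memPointIdeal (gPoly S m i) s (fun j => m j (s j)) := by
  classical
  have : gPoly S m i = (∏ t ∈ (S i).erase (s i), (X i - C t) ^ m i t)
      * (X (σ := Fin n) i - C (s i)) ^ m i (s i) := by
    rw [gPoly, mul_comm]
    exact (Finset.mul_prod_erase _ _ (hs i)).symm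
  rw [this]
  exact memPointIdeal_mul _ (memPointIdeal_pow le_rfl)

lemma memPointIdeal_of_mem_span {S : Fin n → Finset F} {m : Fin n → F → ℕ}
    {h : MvPolynomial (Fin n) F} (hh : h ∈ Ideal.span (Set.range (gPoly S m)))
    (s : Fin n → F) (hs : ∀ j, s j ∈ S j) :
    memPointIdeal h s (fun j => m j (s j)) := by
  refine Submodule.span_induction ?_ ?_ ?_ ?_ hh
  · rintro x ⟨i, rfl⟩
    exact memPointIdeal_gPoly S m i s hs
  · intro u _; simp [taylorCoeff]
  · intro x y _ _ hx hy u hu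
    have : taylorCoeff (x + y) s u = taylorCoeff x s u + taylorCoeff y s u := by
      simp [taylorCoeff, map_add, coeff_add]
    rw [this, hx u hu, hy u hu, add_zero]
  · intro a x _ hx
    rw [smul_eq_mul]
    exact memPointIdeal_mul a hx

lemma shiftPoly_dvd {A : Type*} [CommRing A] (a : A) (k : ℕ) (q : Polynomial A)
    (h : Polynomial.X ^ k ∣ Polynomial.aeval (Polynomial.X + Polynomial.C a) q) :
    (Polynomial.X - Polynomial.C a) ^ k ∣ q := by
  obtain ⟨h', hh⟩ := h
  have e : q = Polynomial.aeval (Polynomial.X - Polynomial.C a)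
      (Polynomial.aeval (Polynomial.X + Polynomial.C a) q) := by
    rw [← Polynomial.aeval_algHom_apply]
    simp
  rw [e, hh, map_mul, map_pow, Polynomial.aeval_X]
  exact Dvd.intro _ rfl

lemma eq_zero_of_memPointIdeal :
    ∀ (n : ℕ) (S : Fin n → Finset F) (m : Fin n → F → ℕ) (r : MvPolynomial (Fin n) F),
      (∀ i, r.degreeOf i < ∑ s ∈ S i, m i s) →
      (∀ s : Fin n → F, (∀ i, s i ∈ S i) → memPointIdeal r s (fun i => m i (s i))) →
      r = 0 := by
  intro n
  induction n with
  | zero =>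
    intro S m r _ hv
    have h0 := hv (fun i => i.elim0) (fun i => i.elim0) 0 (fun i => i.elim0)
    unfold taylorCoeff at h0
    rw [eq_C_of_isEmpty r, aeval_C, algebraMap_eq, coeff_zero_C] at h0
    rw [eq_C_of_isEmpty r, h0, map_zero]
  | succ n ih =>
    intro S m r hdeg hv
    set q := finSuccEquiv F n r with hqdef
    -- the commuting identity
    have main : ∀ (t : F) (s' : Fin n → F),
        finSuccEquiv F n ((aeval fun i => X i + C (Fin.cons t s' i)) r)
          = Polynomial.mapAlgHom (aeval fun i => X i + C (s' i))
              (Polynomial.aeval (Polynomial.X + Polynomial.C (C t)) q) := by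
      intro t s'
      have hhom : ((finSuccEquiv F n).toAlgHom.comp
            (aeval fun i => X i + C (Fin.cons t s' i)))
          = (Polynomial.mapAlgHom (aeval fun i => X i + C (s' i))).comp
              (((Polynomial.aeval (Polynomial.X + Polynomial.C (C t))).restrictScalars F).comp
                (finSuccEquiv F n).toAlgHom) := by
        apply MvPolynomial.algHom_ext
        intro i
        refine Fin.cases ?_ (fun k => ?_) i <;>
          simp [finSuccEquiv_X_zero, finSuccEquiv_X_succ, finSuccEquiv_apply,
            Polynomial.mapAlgHom, algebraMap_eq]
      exact DFunLike.congr_fun hhom r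
    -- divisibility for each t
    have hdvd : ∀ t ∈ S 0, (Polynomial.X - Polynomial.C (C t)) ^ (m 0 t) ∣ q := by
      intro t ht
      refine shiftPoly_dvd _ _ _ (Polynomial.X_pow_dvd_iff.2 fun j hj => ?_)
      set c : MvPolynomial (Fin n) F :=
        (Polynomial.aeval (Polynomial.X + Polynomial.C (C t : MvPolynomial (Fin n) F)) q).coeff j with hcdef
      -- c is the Taylor coefficient polynomial; show c = 0 by ih
      have hc : c = 0 := by
        refine ih (fun i => S i.succ) (fun i => m i.succ) c (fun i => ?_) ?_
        · -- degree bound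
          have htay : Polynomial.aeval (Polynomial.X + Polynomial.C (C t : MvPolynomial (Fin n) F)) q
              = Polynomial.taylor (C t) q := by
            rw [Polynomial.taylor_apply, Polynomial.comp, Polynomial.aeval_def,
              Polynomial.algebraMap_eq]
          have hc2 : c = (Polynomial.hasseDeriv j q).eval (C t) := by
            rw [hcdef, htay, Polynomial.taylor_coeff]
          rw [hc2, Polynomial.eval_eq_sum_range]
          refine lt_of_le_of_lt (le_trans (degreeOf_sum_le _ _ _) ?_) (hdeg i.succ)
          rw [Finset.sup_le_iff]
          intro k _
          refine le_trans (degreeOf_mul_le _ _ _) ?_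
          rw [Polynomial.hasseDeriv_coeff]
          have h1 : degreeOf i (((k + j).choose j : MvPolynomial (Fin n) F)
              * q.coeff (k + j)) ≤ degreeOf i (q.coeff (k + j)) := by
            refine le_trans (degreeOf_mul_le _ _ _) ?_
            rw [← map_natCast (C : F →+* MvPolynomial (Fin n) F), degreeOf_C, zero_add]
          have h2 : degreeOf i ((C t : MvPolynomial (Fin n) F) ^ k) = 0 := by
            rw [← map_pow, degreeOf_C]
          calc degreeOf i ((↑((k + j).choose j) * q.coeff (k + j)))
                + degreeOf i ((C t : MvPolynomial (Fin n) F) ^ k)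
              ≤ degreeOf i (q.coeff (k + j)) + 0 := add_le_add h1 (le_of_eq h2)
            _ = degreeOf i (q.coeff (k + j)) := add_zero _
            _ ≤ degreeOf i.succ r := degreeOf_coeff_finSuccEquiv r i (k + j)
        · -- vanishing at grid points
          intro s' hs' u' hu'
          have key : taylorCoeff c s' u'
              = taylorCoeff r (Fin.cons t s') (Finsupp.cons j u') := by
            unfold taylorCoeff
            have e2 := finSuccEquiv_coeff_coeff u'
              ((aeval fun i => X i + C ((Fin.cons t s' : Fin (n+1) → F) i)) r) j
            rw [← e2, main t s']
            congr 1
            rw [Polynomial.coe_mapAlgHom, Polynomial.coeff_map]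
            rfl
          rw [key]
          refine hv (Fin.cons t s') (fun i => ?_) (Finsupp.cons j u') (fun i => ?_)
          · refine Fin.cases ?_ (fun k => ?_) i
            · simpa using ht
            · simpa using hs' k
          · refine Fin.cases ?_ (fun k => ?_) i
            · simpa [Finsupp.cons_zero] using hj
            · simpa [Finsupp.cons_succ] using hu' k
      exact hc
    -- assemble: the product divides q, and has too-large degree
    have hprodvd : (∏ t ∈ S 0, (Polynomial.X - Polynomial.C (C t)) ^ (m 0 t)) ∣ q := by
      refine Finset.prod_dvd_of_coprime ?_ (fun t ht => hdvd t ht)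
      intro t ht t' ht' hne
      refine IsCoprime.pow ?_
      refine Polynomial.isCoprime_X_sub_C_of_isUnit_sub ?_
      rw [← map_sub]
      exact (Ne.isUnit (sub_ne_zero_of_ne hne)).map (C : F →+* MvPolynomial (Fin n) F)
    have hq0 : q = 0 := by
      by_contra hq
      have hmon : ∀ t ∈ S 0,
          ((Polynomial.X - Polynomial.C (C t : MvPolynomial (Fin n) F)) ^ (m 0 t)).Monic :=
        fun t _ => (Polynomial.monic_X_sub_C (C t)).pow (m 0 t)
      have hdegP : (∏ t ∈ S 0,
          (Polynomial.X - Polynomial.C (C t : MvPolynomial (Fin n) F)) ^ (m 0 t)).natDegree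
          = ∑ t ∈ S 0, m 0 t := by
        rw [Polynomial.natDegree_prod_of_monic _ _ hmon]
        refine Finset.sum_congr rfl fun t _ => ?_
        rw [Polynomial.natDegree_pow, Polynomial.natDegree_X_sub_C, mul_one]
      have hle := Polynomial.natDegree_le_of_dvd hprodvd hq
      rw [hdegP, natDegree_finSuccEquiv] at hle
      exact absurd (hdeg 0) (not_lt.2 hle)
    have : finSuccEquiv F n r = finSuccEquiv F n 0 := by rw [map_zero]; exact hq0
    exact (finSuccEquiv F n).injective this

end AuxStmt3

open AuxStmt3 in
/-- If `r` is the (unique) remainder of `f` modulo `g_1, …, g_n`, with degree in each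
variable `x_i` less than `d_i`, then `r = 0` if and only if `f ∈ I = ⋂_{s ∈ S} I(s, m(s))`. -/
theorem stmt_3 {F : Type*} [Field F] {n : ℕ} (hn : 1 ≤ n)
    (S : Fin n → Finset F) (hS : ∀ i, (S i).Nonempty)
    (m : Fin n → F → ℕ) (hm : ∀ i, ∀ s ∈ S i, 1 ≤ m i s)
    (f r : MvPolynomial (Fin n) F)
    (hr : ∀ i, r.degreeOf i < dSize S m i)
    (hfr : f - r ∈ Ideal.span (Set.range (gPoly S m))) :
    r = 0 ↔
      ∀ s : Fin n → F, (∀ i, s i ∈ S i) →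
        memPointIdeal f s fun i => m i (s i) := by
  constructor
  · intro h0 s hs
    have hf : f = f - r := by rw [h0, sub_zero]
    rw [hf]
    exact memPointIdeal_of_mem_span hfr s hs
  · intro h
    refine eq_zero_of_memPointIdeal n S m r (fun i => by simpa [dSize] using hr i) ?_
    intro s hs
    have h2 := memPointIdeal_of_mem_span hfr s hs
    have hrr : r = f - (f - r) := by ring
    rw [hrr]
    exact memPointIdeal_sub (h s hs) h2
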